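/- The efficient influence function of the mediation functional has mean zero at the truth: E[S] = 0, where S := 1{E=1}·[P(M=M|E=0,X)/(P(E=1|X)·P(M=M|E=1,X))]·(Y − b(M,X)) + [1{E=0}/P(E=0|X)]·(b(M,X) − η(X)) + η(X) − θ0. -/

import Mathlib

open MeasureTheory ProbabilityTheory

/-- Conditional probability of `B` given the event `A`: `P(B ∩ A) / P(A)`. -/
noncomputable def cP {Ω : Type*} [MeasurableSpace Ω] (μ : Measure Ω) (B A : Set Ω) : ℝ :=
  (μ (B ∩ A)).toReal / (μ A).toReal

/-- Conditional expectation of `Y` given the event `A`: `E[Y·1_A] / P(A)`. -/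
noncomputable def cE {Ω : Type*} [MeasurableSpace Ω] (μ : Measure Ω) (Y : Ω → ℝ) (A : Set Ω) : ℝ :=
  (∫ ω in A, Y ω ∂μ) / (μ A).toReal

open Classical in
/-- The mediation functional
`θ0 = Σ_{m, x : P(X=x)>0} E(Y | E=1, M=m, X=x) · P(M=m | E=0, X=x) · P(X=x)`. -/
noncomputable def theta0 {Ω 𝒳 𝒮 : Type*} [MeasurableSpace Ω] [Fintype 𝒳] [Fintype 𝒮]
    (μ : Measure Ω) (X : Ω → 𝒳) (M : Ω → 𝒮) (E : Ω → Bool) (Y : Ω → ℝ) : ℝ :=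
  ∑ m : 𝒮, ∑ x ∈ Finset.univ.filter (fun x => μ (X ⁻¹' {x}) ≠ 0),
    cE μ Y (E ⁻¹' {true} ∩ M ⁻¹' {m} ∩ X ⁻¹' {x}) *
      cP μ (M ⁻¹' {m}) (E ⁻¹' {false} ∩ X ⁻¹' {x}) *
      (μ (X ⁻¹' {x})).toReal

section Aux
variable {Ω : Type*} [MeasurableSpace Ω] (μ : Measure Ω) [IsFiniteMeasure μ]

lemma cE_mul (Y : Ω → ℝ) (A : Set Ω) :
    cE μ Y A * (μ A).toReal = ∫ ω in A, Y ω ∂μ := by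
  unfold cE
  rcases eq_or_ne (μ A) 0 with h | h
  · simp [h, Measure.restrict_eq_zero.mpr h]
  · rw [div_mul_cancel₀]
    exact ENNReal.toReal_ne_zero.mpr ⟨h, measure_ne_top μ A⟩

lemma cP_mul (B A : Set Ω) :
    cP μ B A * (μ A).toReal = (μ (B ∩ A)).toReal := by
  unfold cP
  rcases eq_or_ne (μ A) 0 with h | h
  · have h2 : μ (B ∩ A) = 0 := measure_mono_null Set.inter_subset_right h
    simp [h, h2]
  · rw [div_mul_cancel₀]
    exact ENNReal.toReal_ne_zero.mpr ⟨h, measure_ne_top μ A⟩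

lemma fiber_sum {α : Type*} [Fintype α] [MeasurableSpace α] [MeasurableSingletonClass α]
    (f : Ω → α) (hf : Measurable f) (S : Set Ω) (hS : MeasurableSet S) :
    ∑ a : α, (μ (f ⁻¹' {a} ∩ S)).toReal = (μ S).toReal := by
  rw [← ENNReal.toReal_sum (fun a _ => measure_ne_top μ _)]
  congr 1
  rw [← measure_biUnion_finset]
  · congr 1
    ext ω
    simp
  · intro a _ b _ hab
    simp only [Function.onFun]
    apply Set.disjoint_left.mpr
    rintro ω ⟨h1, _⟩ ⟨h2, _⟩
    simp only [Set.mem_preimage, Set.mem_singleton_iff] at h1 h2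
    exact hab (h1 ▸ h2 ▸ rfl)
  · exact fun a _ => (hf (measurableSet_singleton a)).inter hS
end Aux

/-- the efficient influence function of the mediation functional has mean
zero at the truth: `E[S] = 0`. -/
theorem mediation_eif_mean_zero
    {Ω 𝒳 𝒮 : Type*} [MeasurableSpace Ω] [Fintype 𝒳] [Fintype 𝒮]
    [MeasurableSpace 𝒳] [MeasurableSingletonClass 𝒳]
    [MeasurableSpace 𝒮] [MeasurableSingletonClass 𝒮]
    (μ : Measure Ω) [IsProbabilityMeasure μ]
    (X : Ω → 𝒳) (M : Ω → 𝒮) (E : Ω → Bool) (Y : Ω → ℝ)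
    (hX : Measurable X) (hM : Measurable M) (hE : Measurable E)
    (hY : Integrable Y μ)
    (hposE : ∀ (e : Bool) (x : 𝒳), μ (X ⁻¹' {x}) ≠ 0 → μ (E ⁻¹' {e} ∩ X ⁻¹' {x}) ≠ 0)
    (hposM : ∀ (m : 𝒮) (e : Bool) (x : 𝒳), μ (X ⁻¹' {x}) ≠ 0 →
      μ (M ⁻¹' {m} ∩ E ⁻¹' {e} ∩ X ⁻¹' {x}) ≠ 0)
    -- nuisance functions b(m,x) = E(Y|E=1,M=m,X=x) and η(x) = Σ_m b(m,x)·P(M=m|E=0,X=x)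
    (b : 𝒮 → 𝒳 → ℝ)
    (hb : ∀ m x, b m x = cE μ Y (E ⁻¹' {true} ∩ M ⁻¹' {m} ∩ X ⁻¹' {x}))
    (η : 𝒳 → ℝ)
    (hη : ∀ x, η x = ∑ m : 𝒮, b m x * cP μ (M ⁻¹' {m}) (E ⁻¹' {false} ∩ X ⁻¹' {x})) :
    ∫ ω,
        ((if E ω then (1:ℝ) else 0) *
            (cP μ (M ⁻¹' {M ω}) (E ⁻¹' {false} ∩ X ⁻¹' {X ω}) /
              (cP μ (E ⁻¹' {true}) (X ⁻¹' {X ω}) *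
                cP μ (M ⁻¹' {M ω}) (E ⁻¹' {true} ∩ X ⁻¹' {X ω}))) *
            (Y ω - b (M ω) (X ω)) +
          (if E ω then (0:ℝ) else 1) / cP μ (E ⁻¹' {false}) (X ⁻¹' {X ω}) *
            (b (M ω) (X ω) - η (X ω)) +
          η (X ω) - theta0 μ X M E Y) ∂μ = 0 := by
  classical
  set θ := theta0 μ X M E Y with hθdef
  set w : 𝒮 → 𝒳 → ℝ := fun m x =>
    cP μ (M ⁻¹' {m}) (E ⁻¹' {false} ∩ X ⁻¹' {x}) /
      (cP μ (E ⁻¹' {true}) (X ⁻¹' {x}) * cP μ (M ⁻¹' {m}) (E ⁻¹' {true} ∩ X ⁻¹' {x}))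
    with hwdef
  set c : Bool → 𝒮 → 𝒳 → ℝ := fun e m x => if e then w m x else 0 with hcdef
  set d : Bool → 𝒮 → 𝒳 → ℝ := fun e m x =>
    (if e then -(w m x * b m x)
     else (b m x - η x) / cP μ (E ⁻¹' {false}) (X ⁻¹' {x})) + η x - θ with hddef
  set A : Bool × 𝒮 × 𝒳 → Set Ω :=
    fun t => E ⁻¹' {t.1} ∩ (M ⁻¹' {t.2.1} ∩ X ⁻¹' {t.2.2}) with hAdef
  have hAmeas : ∀ t, MeasurableSet (A t) := fun t =>
    ((hE (measurableSet_singleton _)).inter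
      ((hM (measurableSet_singleton _)).inter (hX (measurableSet_singleton _))))
  have hg : ∀ ω,
      ((if E ω then (1:ℝ) else 0) *
            (cP μ (M ⁻¹' {M ω}) (E ⁻¹' {false} ∩ X ⁻¹' {X ω}) /
              (cP μ (E ⁻¹' {true}) (X ⁻¹' {X ω}) *
                cP μ (M ⁻¹' {M ω}) (E ⁻¹' {true} ∩ X ⁻¹' {X ω}))) *
            (Y ω - b (M ω) (X ω)) +
          (if E ω then (0:ℝ) else 1) / cP μ (E ⁻¹' {false}) (X ⁻¹' {X ω}) *
            (b (M ω) (X ω) - η (X ω)) +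
          η (X ω) - θ)
        = ∑ t : Bool × 𝒮 × 𝒳,
            Set.indicator (A t) (fun ω' => c t.1 t.2.1 t.2.2 * Y ω' + d t.1 t.2.1 t.2.2) ω := by
    intro ω
    rw [Fintype.sum_eq_single (E ω, M ω, X ω) (fun t ht => by
      apply Set.indicator_of_notMem
      simp only [hAdef, Set.mem_inter_iff, Set.mem_preimage, Set.mem_singleton_iff]
      rintro ⟨h1, h2, h3⟩
      exact ht (by simp [Prod.ext_iff, h1, h2, h3]))]
    rw [Set.indicator_of_mem (by simp [hAdef])]
    simp only [hcdef, hddef, hwdef]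
    cases hEω : E ω <;> simp <;> ring
  have hint : ∀ t : Bool × 𝒮 × 𝒳,
      Integrable (Set.indicator (A t) (fun ω' => c t.1 t.2.1 t.2.2 * Y ω' + d t.1 t.2.1 t.2.2)) μ :=
    fun t => ((hY.const_mul _).add (integrable_const _)).indicator (hAmeas t)
  have hstep : (∫ ω,
        ((if E ω then (1:ℝ) else 0) *
            (cP μ (M ⁻¹' {M ω}) (E ⁻¹' {false} ∩ X ⁻¹' {X ω}) /
              (cP μ (E ⁻¹' {true}) (X ⁻¹' {X ω}) *
                cP μ (M ⁻¹' {M ω}) (E ⁻¹' {true} ∩ X ⁻¹' {X ω}))) *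
            (Y ω - b (M ω) (X ω)) +
          (if E ω then (0:ℝ) else 1) / cP μ (E ⁻¹' {false}) (X ⁻¹' {X ω}) *
            (b (M ω) (X ω) - η (X ω)) +
          η (X ω) - θ) ∂μ)
      = ∑ t : Bool × 𝒮 × 𝒳,
          (c t.1 t.2.1 t.2.2 * ∫ ω in A t, Y ω ∂μ + d t.1 t.2.1 t.2.2 * (μ (A t)).toReal) := by
    rw [integral_congr_ae (Filter.Eventually.of_forall hg),
      integral_finset_sum _ (fun t _ => hint t)]
    refine Finset.sum_congr rfl fun t _ => ?_
    rw [integral_indicator (hAmeas t), integral_add (hY.integrableOn.const_mul _)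
      (integrableOn_const (measure_ne_top _ _)),
      integral_const_mul, setIntegral_const, smul_eq_mul, measureReal_def]
    ring
  rw [hstep]
  -- Key facts
  have hT1 : ∀ m x, ∫ ω in A (true, m, x), Y ω ∂μ = b m x * (μ (A (true, m, x))).toReal := by
    intro m x
    have hset : A (true, m, x) = E ⁻¹' {true} ∩ M ⁻¹' {m} ∩ X ⁻¹' {x} := by
      simp only [hAdef]; rw [Set.inter_assoc]
    rw [hset, hb m x]
    exact (cE_mul μ Y _).symm
  have hEXmeas : ∀ (e : Bool) (x : 𝒳), MeasurableSet (E ⁻¹' {e} ∩ X ⁻¹' {x}) :=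
    fun e x => (hE (measurableSet_singleton e)).inter (hX (measurableSet_singleton x))
  have hAcomm : ∀ (e : Bool) (m : 𝒮) (x : 𝒳),
      A (e, m, x) = M ⁻¹' {m} ∩ (E ⁻¹' {e} ∩ X ⁻¹' {x}) := by
    intro e m x; simp only [hAdef]; rw [Set.inter_left_comm]
  have hsumM : ∀ (e : Bool) (x : 𝒳),
      ∑ m : 𝒮, (μ (A (e, m, x))).toReal = (μ (E ⁻¹' {e} ∩ X ⁻¹' {x})).toReal := by
    intro e x
    simp only [hAcomm]
    exact fiber_sum μ M hM _ (hEXmeas e x)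
  have hsumE : ∀ x : 𝒳,
      (μ (E ⁻¹' {true} ∩ X ⁻¹' {x})).toReal + (μ (E ⁻¹' {false} ∩ X ⁻¹' {x})).toReal
        = (μ (X ⁻¹' {x})).toReal := by
    intro x
    have h := fiber_sum μ E hE (X ⁻¹' {x}) (hX (measurableSet_singleton x))
    rwa [Fintype.sum_bool] at h
  have hT2 : ∀ x : 𝒳,
      ∑ m : 𝒮, (b m x - η x) * (μ (A (false, m, x))).toReal = 0 := by
    intro x
    have hA0 : ∀ m : 𝒮, (μ (A (false, m, x))).toReal
        = cP μ (M ⁻¹' {m}) (E ⁻¹' {false} ∩ X ⁻¹' {x})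
            * (μ (E ⁻¹' {false} ∩ X ⁻¹' {x})).toReal := by
      intro m; rw [hAcomm false m x, ← cP_mul]
    simp only [sub_mul, Finset.sum_sub_distrib]
    rw [sub_eq_zero]
    calc ∑ m : 𝒮, b m x * (μ (A (false, m, x))).toReal
        = (∑ m : 𝒮, b m x * cP μ (M ⁻¹' {m}) (E ⁻¹' {false} ∩ X ⁻¹' {x}))
            * (μ (E ⁻¹' {false} ∩ X ⁻¹' {x})).toReal := by
          rw [Finset.sum_mul]
          exact Finset.sum_congr rfl fun m _ => by rw [hA0 m]; ring
      _ = η x * (μ (E ⁻¹' {false} ∩ X ⁻¹' {x})).toReal := by rw [← hη x]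
      _ = ∑ m : 𝒮, η x * (μ (A (false, m, x))).toReal := by
          rw [← Finset.mul_sum, hsumM]
  have hT3 : ∑ x : 𝒳, η x * (μ (X ⁻¹' {x})).toReal = θ := by
    have hθ2 : θ = ∑ x : 𝒳, ∑ m : 𝒮,
        b m x * cP μ (M ⁻¹' {m}) (E ⁻¹' {false} ∩ X ⁻¹' {x}) * (μ (X ⁻¹' {x})).toReal := by
      rw [hθdef]
      unfold theta0
      calc ∑ m : 𝒮, ∑ x ∈ Finset.univ.filter (fun x => μ (X ⁻¹' {x}) ≠ 0),
            cE μ Y (E ⁻¹' {true} ∩ M ⁻¹' {m} ∩ X ⁻¹' {x}) *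
              cP μ (M ⁻¹' {m}) (E ⁻¹' {false} ∩ X ⁻¹' {x}) * (μ (X ⁻¹' {x})).toReal
          = ∑ m : 𝒮, ∑ x : 𝒳,
            cE μ Y (E ⁻¹' {true} ∩ M ⁻¹' {m} ∩ X ⁻¹' {x}) *
              cP μ (M ⁻¹' {m}) (E ⁻¹' {false} ∩ X ⁻¹' {x}) * (μ (X ⁻¹' {x})).toReal := by
            refine Finset.sum_congr rfl fun m _ => ?_
            refine Finset.sum_subset (Finset.filter_subset _ _) fun x _ hx => ?_
            simp only [Finset.mem_filter, Finset.mem_univ, true_and, not_not] at hx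
            simp [hx]
        _ = ∑ x : 𝒳, ∑ m : 𝒮,
            cE μ Y (E ⁻¹' {true} ∩ M ⁻¹' {m} ∩ X ⁻¹' {x}) *
              cP μ (M ⁻¹' {m}) (E ⁻¹' {false} ∩ X ⁻¹' {x}) * (μ (X ⁻¹' {x})).toReal :=
            Finset.sum_comm
        _ = ∑ x : 𝒳, ∑ m : 𝒮,
            b m x * cP μ (M ⁻¹' {m}) (E ⁻¹' {false} ∩ X ⁻¹' {x}) * (μ (X ⁻¹' {x})).toReal := by
            refine Finset.sum_congr rfl fun x _ => Finset.sum_congr rfl fun m _ => ?_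
            rw [hb m x]
    rw [hθ2]
    refine Finset.sum_congr rfl fun x _ => ?_
    rw [hη x, Finset.sum_mul]
  have huniv : ∑ x : 𝒳, (μ (X ⁻¹' {x})).toReal = 1 := by
    have h := fiber_sum μ X hX Set.univ MeasurableSet.univ
    simpa using h
  -- assemble
  rw [Fintype.sum_prod_type]
  simp only [Fintype.sum_prod_type]
  rw [Fintype.sum_bool]
  have htrue : (∑ m : 𝒮, ∑ x : 𝒳,
      (c true m x * ∫ ω in A (true, m, x), Y ω ∂μ + d true m x * (μ (A (true, m, x))).toReal))
      = ∑ x : 𝒳, (η x - θ) * (μ (E ⁻¹' {true} ∩ X ⁻¹' {x})).toReal := by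
    rw [Finset.sum_comm]
    refine Finset.sum_congr rfl fun x _ => ?_
    calc ∑ m : 𝒮,
        (c true m x * ∫ ω in A (true, m, x), Y ω ∂μ + d true m x * (μ (A (true, m, x))).toReal)
        = ∑ m : 𝒮, (η x - θ) * (μ (A (true, m, x))).toReal := by
          refine Finset.sum_congr rfl fun m _ => ?_
          rw [hT1 m x]
          simp only [hcdef, hddef, reduceIte]
          ring
      _ = (η x - θ) * (μ (E ⁻¹' {true} ∩ X ⁻¹' {x})).toReal := by
          rw [← Finset.mul_sum, hsumM true x]
  have hfalse : (∑ m : 𝒮, ∑ x : 𝒳,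
      (c false m x * ∫ ω in A (false, m, x), Y ω ∂μ + d false m x * (μ (A (false, m, x))).toReal))
      = ∑ x : 𝒳, (η x - θ) * (μ (E ⁻¹' {false} ∩ X ⁻¹' {x})).toReal := by
    rw [Finset.sum_comm]
    refine Finset.sum_congr rfl fun x _ => ?_
    have step : ∀ m : 𝒮,
        (c false m x * ∫ ω in A (false, m, x), Y ω ∂μ
          + d false m x * (μ (A (false, m, x))).toReal)
        = (b m x - η x) * (μ (A (false, m, x))).toReal
            / cP μ (E ⁻¹' {false}) (X ⁻¹' {x})
          + (η x - θ) * (μ (A (false, m, x))).toReal := by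
      intro m
      simp only [hcdef, hddef, Bool.false_eq_true, if_false]
      ring
    simp only [step]
    rw [Finset.sum_add_distrib, ← Finset.sum_div, hT2 x, zero_div, zero_add,
      ← Finset.mul_sum, hsumM false x]
  rw [htrue, hfalse, ← Finset.sum_add_distrib]
  have : ∀ x : 𝒳, (η x - θ) * (μ (E ⁻¹' {true} ∩ X ⁻¹' {x})).toReal
      + (η x - θ) * (μ (E ⁻¹' {false} ∩ X ⁻¹' {x})).toReal
      = (η x - θ) * (μ (X ⁻¹' {x})).toReal := by
    intro x; rw [← hsumE x]; ring
  simp only [this]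
  simp only [sub_mul, Finset.sum_sub_distrib]
  rw [hT3, ← Finset.mul_sum, huniv, mul_one, sub_self]
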